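/- Let σ ∈ (0,1) and c ≥ 0 be real, and let (V_k)_{k≥0} be a sequence of nonnegative reals with V_0 = 0 and V_{k+1} ≤ σ·V_k + c/(k+1) for all k ≥ 0. Then for every n ≥ 1, V_n ≤ c·(1 + ln n). -/
import Mathlib

/-- If `σ ∈ (0,1)`, `c ≥ 0`, and `(V_k)` is a nonnegative real sequence with
`V_0 = 0` and `V_{k+1} ≤ σ·V_k + c/(k+1)` for all `k ≥ 0`, then for every `n ≥ 1`,
`V_n ≤ c·(1 + Real.log n)`. -/
theorem stmt_12 (σ c : ℝ) (hσ0 : 0 < σ) (hσ1 : σ < 1) (hc : 0 ≤ c) (V : ℕ → ℝ)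
    (hVnonneg : ∀ k, 0 ≤ V k) (hV0 : V 0 = 0)
    (hrec : ∀ k, V (k + 1) ≤ σ * V k + c / ((k : ℝ) + 1))
    (n : ℕ) (hn : 1 ≤ n) :
    V n ≤ c * (1 + Real.log n) := by
  have key : ∀ m : ℕ, V m ≤ c * (harmonic m : ℝ) := by
    intro m
    induction m with
    | zero => simp [hV0, harmonic]
    | succ k ih =>
      have h1 : σ * V k ≤ V k := by
        nlinarith [hVnonneg k]
      have h2 : V (k + 1) ≤ V k + c / ((k : ℝ) + 1) := le_trans (hrec k) (by linarith)
      have h3 : (harmonic (k + 1) : ℝ) = (harmonic k : ℝ) + ((k : ℝ) + 1)⁻¹ := by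
        rw [harmonic_succ]; push_cast; ring
      rw [h3]
      have := div_nonneg hc (by positivity : (0:ℝ) ≤ (k : ℝ) + 1)
      calc V (k + 1) ≤ V k + c / ((k : ℝ) + 1) := h2
        _ ≤ c * (harmonic k : ℝ) + c * ((k : ℝ) + 1)⁻¹ := by
            rw [div_eq_mul_inv] at *; linarith [ih]
        _ = c * ((harmonic k : ℝ) + ((k : ℝ) + 1)⁻¹) := by ring
  calc V n ≤ c * (harmonic n : ℝ) := key n
    _ ≤ c * (1 + Real.log n) := by
        exact mul_le_mul_of_nonneg_left (harmonic_le_one_add_log n) hc
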